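/- For finite-dimensional complex vector spaces V and W and linear subspaces C, D ⊆ V, the intersection of tensor powers satisfies C^{⊗N} ∩ D^{⊗N} = (C ∩ D)^{⊗N} inside V^{⊗N}, for every N ≥ 1. -/

import Mathlib

open scoped TensorProduct
open PiTensorProduct
open Module

/-- Pure tensors of basis vectors span the tensor power. -/
lemma span_basis_tprod {κ : Type*} {P : Type*} [AddCommGroup P] [Module ℂ P]
    (c : Basis κ ℂ P) (N : ℕ) :
    Submodule.span ℂ (Set.range fun f : Fin N → κ =>
      PiTensorProduct.tprod ℂ fun i => c (f i)) = ⊤ := by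
  set W := Submodule.span ℂ (Set.range fun f : Fin N → κ =>
      PiTensorProduct.tprod ℂ fun i => c (f i))
  rw [eq_top_iff, ← PiTensorProduct.span_tprod_eq_top, Submodule.span_le]
  rintro x ⟨m, rfl⟩
  have key : W.mkQ.compMultilinearMap (PiTensorProduct.tprod ℂ (s := fun _ : Fin N => P))
      = 0 := by
    apply Basis.ext_multilinear (fun _ => c)
    intro v
    simp only [LinearMap.compMultilinearMap_apply, MultilinearMap.zero_apply]
    rw [Submodule.mkQ_apply, Submodule.Quotient.mk_eq_zero]
    exact Submodule.subset_span ⟨v, rfl⟩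
  have h2 := MultilinearMap.congr_fun key m
  simp only [LinearMap.compMultilinearMap_apply, MultilinearMap.zero_apply,
    Submodule.mkQ_apply, Submodule.Quotient.mk_eq_zero] at h2
  exact h2

lemma range_map_eq_span_basis {κ : Type*} {P V : Type*} [AddCommGroup P] [Module ℂ P]
    [AddCommGroup V] [Module ℂ V] (φ : P →ₗ[ℂ] V) (c : Basis κ ℂ P) (N : ℕ) :
    LinearMap.range (PiTensorProduct.map fun _ : Fin N => φ)
      = Submodule.span ℂ (Set.range fun f : Fin N → κ =>
          PiTensorProduct.tprod ℂ fun i => φ (c (f i))) := by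
  rw [← Submodule.map_top, ← span_basis_tprod c N, Submodule.map_span, ← Set.range_comp]
  have : (⇑(PiTensorProduct.map fun _ : Fin N => φ) ∘ fun f : Fin N → κ =>
      PiTensorProduct.tprod ℂ fun i => c (f i))
      = fun f : Fin N → κ => PiTensorProduct.tprod ℂ fun i => φ (c (f i)) := by
    funext f
    simp [PiTensorProduct.map_tprod]
  rw [this]

lemma span_tprod_inf {V : Type*} [AddCommGroup V] [Module ℂ V] {ι : Type*}
    (b : Basis ι ℂ V) (s t : Set ι) (N : ℕ) :
    Submodule.span ℂ ((fun h : Fin N → ι => PiTensorProduct.tprod ℂ fun i => b (h i)) ''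
        {h | ∀ i, h i ∈ s}) ⊓
      Submodule.span ℂ ((fun h : Fin N → ι => PiTensorProduct.tprod ℂ fun i => b (h i)) ''
        {h | ∀ i, h i ∈ t})
    = Submodule.span ℂ ((fun h : Fin N → ι => PiTensorProduct.tprod ℂ fun i => b (h i)) ''
        {h | ∀ i, h i ∈ s ∩ t}) := by
  classical
  set G : (Fin N → ι) → (⨂[ℂ] (_ : Fin N), V) :=
    fun h => PiTensorProduct.tprod ℂ fun i => b (h i) with hG
  apply le_antisymm
  · set q : V →ₗ[ℂ] V := b.constr ℂ fun j => if j ∈ s then b j else 0 with hq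
    set Q : (⨂[ℂ] (_ : Fin N), V) →ₗ[ℂ] (⨂[ℂ] (_ : Fin N), V) :=
      PiTensorProduct.map fun _ : Fin N => q with hQ
    have hqb : ∀ j : ι, q (b j) = if j ∈ s then b j else 0 := fun j => b.constr_basis ℂ _ j
    have hQG : ∀ h : Fin N → ι, Q (G h) =
        PiTensorProduct.tprod ℂ fun i => if h i ∈ s then b (h i) else 0 := by
      intro h
      rw [hG, hQ, PiTensorProduct.map_tprod]
      exact congrArg _ (funext fun i => hqb (h i))
    have hfix : Set.EqOn ⇑Q id (G '' {h | ∀ i, h i ∈ s}) := by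
      rintro x ⟨h, hh, rfl⟩
      rw [id_eq, hQG]
      exact congrArg _ (funext fun i => if_pos (hh i))
    rintro x ⟨hxs, hxt⟩
    have hx1 : Q x = x := LinearMap.eqOn_span (f := Q)
      (g := (LinearMap.id : (⨂[ℂ] (_ : Fin N), V) →ₗ[ℂ] (⨂[ℂ] (_ : Fin N), V))) hfix hxs
    have hx2 : Q x ∈ Submodule.span ℂ (G '' {h | ∀ i, h i ∈ s ∩ t}) := by
      have : Submodule.map Q (Submodule.span ℂ (G '' {h | ∀ i, h i ∈ t}))
          ≤ Submodule.span ℂ (G '' {h | ∀ i, h i ∈ s ∩ t}) := by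
        rw [Submodule.map_span, Submodule.span_le]
        rintro y ⟨y', ⟨h, hh, rfl⟩, rfl⟩
        by_cases hcase : ∀ i, h i ∈ s
        · have : Q (G h) = G h := by
            rw [hQG]
            exact congrArg _ (funext fun i => if_pos (hcase i))
          rw [this]
          exact Submodule.subset_span ⟨h, fun i => ⟨hcase i, hh i⟩, rfl⟩
        · push_neg at hcase
          obtain ⟨i0, hi0⟩ := hcase
          have : Q (G h) = 0 := by
            rw [hQG]
            exact MultilinearMap.map_coord_zero _ i0 (by simp [hi0])
          rw [this]
          exact Submodule.zero_mem _
      exact this ⟨x, hxt, rfl⟩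
    rwa [hx1] at hx2
  · exact le_inf
      (Submodule.span_mono (Set.image_mono fun h hh i => (hh i).1))
      (Submodule.span_mono (Set.image_mono fun h hh i => (hh i).2))

lemma subBasis {V : Type*} [AddCommGroup V] [Module ℂ V] {s : Set V} {P : Submodule ℂ V}
    (hli : LinearIndependent ℂ ((↑) : s → V)) (hspan : Submodule.span ℂ s = P) :
    ∃ c : Basis s ℂ P, ∀ x : s, (P.subtype (c x) : V) = x := by
  have h1 : Submodule.span ℂ (Set.range ((↑) : s → V)) = P := by
    rw [Subtype.range_coe]; exact hspan
  refine ⟨(Basis.span hli).map (LinearEquiv.ofEq _ _ h1), fun x => ?_⟩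
  simp only [Basis.map_apply, Submodule.coe_subtype]
  rw [LinearEquiv.coe_ofEq_apply, Basis.span_apply]

theorem stmt0 (V : Type*) [AddCommGroup V] [Module ℂ V] [FiniteDimensional ℂ V]
    (C D : Submodule ℂ V) (N : ℕ) (hN : 1 ≤ N) :
    (LinearMap.range (PiTensorProduct.map (fun _ : Fin N => C.subtype)) ⊓
      LinearMap.range (PiTensorProduct.map (fun _ : Fin N => D.subtype)))
    = LinearMap.range (PiTensorProduct.map (fun _ : Fin N => (C ⊓ D).subtype)) := by
  classical
  obtain ⟨sE, hsE_sub, hsE_span, hsE_li⟩ :=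
    exists_linearIndependent ℂ ((C ⊓ D : Submodule ℂ V) : Set V)
  rw [Submodule.span_eq] at hsE_span
  have hsEC : sE ⊆ (C : Set V) := fun v hv => (hsE_sub hv).1
  have hsED : sE ⊆ (D : Set V) := fun v hv => (hsE_sub hv).2
  -- extend to C and D
  have hsE_li' : LinearIndepOn ℂ id sE := hsE_li
  have hsC_sub : hsE_li'.extend hsEC ⊆ (C : Set V) := hsE_li'.extend_subset hsEC
  have hsC_sup : sE ⊆ hsE_li'.extend hsEC := hsE_li'.subset_extend hsEC
  have hsC_span : Submodule.span ℂ (hsE_li'.extend hsEC) = C := by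
    rw [hsE_li'.span_extend_eq_span hsEC, Submodule.span_eq]
  have hsC_li : LinearIndependent ℂ ((↑) : hsE_li'.extend hsEC → V) :=
    hsE_li'.linearIndepOn_extend hsEC
  have hsD_sub : hsE_li'.extend hsED ⊆ (D : Set V) := hsE_li'.extend_subset hsED
  have hsD_sup : sE ⊆ hsE_li'.extend hsED := hsE_li'.subset_extend hsED
  have hsD_span : Submodule.span ℂ (hsE_li'.extend hsED) = D := by
    rw [hsE_li'.span_extend_eq_span hsED, Submodule.span_eq]
  have hsD_li : LinearIndependent ℂ ((↑) : hsE_li'.extend hsED → V) :=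
    hsE_li'.linearIndepOn_extend hsED
  set sC := hsE_li'.extend hsEC
  set sD := hsE_li'.extend hsED
  -- intersection of the extensions
  have hInter : sC ∩ sD = sE := by
    apply Set.Subset.antisymm
    · rintro v ⟨hvC, hvD⟩
      by_contra hvE
      have hvmem : v ∈ Submodule.span ℂ sE := by
        rw [hsE_span]; exact ⟨hsC_sub hvC, hsD_sub hvD⟩
      have himg : (((↑) : sC → V) '' {y : sC | (y : V) ∈ sE}) = sE := by
        ext w
        constructor
        · rintro ⟨y, hy, rfl⟩; exact hy
        · intro hw; exact ⟨⟨w, hsC_sup hw⟩, hw, rfl⟩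
      have h2 := hsC_li.notMem_span_image
        (s := {y : sC | (y : V) ∈ sE}) (x := ⟨v, hvC⟩) hvE
      rw [himg] at h2
      exact h2 hvmem
    · exact Set.subset_inter hsC_sup hsD_sup
  -- union is linearly independent
  have hdisjE : Disjoint (Submodule.span ℂ sE) (Submodule.span ℂ (sD \ sE)) := by
    have hdis : Disjoint {y : sD | (y : V) ∈ sE} {y : sD | (y : V) ∉ sE} :=
      Set.disjoint_left.2 fun y hy hy2 => hy2 hy
    have h3 := hsD_li.disjoint_span_image hdis
    have himg1 : (((↑) : sD → V) '' {y : sD | (y : V) ∈ sE}) = sE := by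
      ext w
      constructor
      · rintro ⟨y, hy, rfl⟩; exact hy
      · intro hw; exact ⟨⟨w, hsD_sup hw⟩, hw, rfl⟩
    have himg2 : (((↑) : sD → V) '' {y : sD | (y : V) ∉ sE}) = sD \ sE := by
      ext w
      constructor
      · rintro ⟨y, hy, rfl⟩; exact ⟨y.2, hy⟩
      · rintro ⟨hw1, hw2⟩; exact ⟨⟨w, hw1⟩, hw2, rfl⟩
    rwa [himg1, himg2] at h3
  have hdisj : Disjoint (Submodule.span ℂ sC) (Submodule.span ℂ (sD \ sC)) := by
    rw [Submodule.disjoint_def]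
    intro x hx1 hx2
    have hxE : x ∈ Submodule.span ℂ sE := by
      rw [hsE_span]
      refine ⟨?_, ?_⟩
      · rw [← hsC_span]; exact hx1
      · have : Submodule.span ℂ (sD \ sC) ≤ Submodule.span ℂ sD :=
          Submodule.span_mono Set.diff_subset
        rw [← hsD_span]; exact this hx2
    have hxD' : x ∈ Submodule.span ℂ (sD \ sE) :=
      Submodule.span_mono (Set.diff_subset_diff_right hsC_sup) hx2
    exact Submodule.disjoint_def.1 hdisjE x hxE hxD'
  have hUnion_li : LinearIndependent ℂ ((↑) : ↥(sC ∪ sD) → V) := by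
    rw [← Set.union_diff_self]
    exact LinearIndepOn.id_union (s := sC) (t := sD \ sC) hsC_li
      (LinearIndepOn.mono (show LinearIndepOn ℂ id sD from hsD_li) Set.diff_subset) hdisj
  -- the big basis
  have hUnion_li' : LinearIndepOn ℂ id (sC ∪ sD) := hUnion_li
  set I := hUnion_li'.extend (Set.subset_univ _) with hIdef
  set b := Basis.extend hUnion_li' with hbdef
  have hbcoe : ⇑b = ((↑) : I → V) := Basis.coe_extend _
  have hsCI : sC ⊆ I := Set.subset_union_left.trans (hUnion_li'.subset_extend _)
  have hsDI : sD ⊆ I := Set.subset_union_right.trans (hUnion_li'.subset_extend _)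
  have hsEI : sE ⊆ I := hsC_sup.trans hsCI
  -- bases of the submodules
  obtain ⟨cC, hcC⟩ := subBasis hsC_li hsC_span
  obtain ⟨cD, hcD⟩ := subBasis hsD_li hsD_span
  obtain ⟨cE, hcE⟩ := subBasis hsE_li hsE_span
  rw [range_map_eq_span_basis C.subtype cC N, range_map_eq_span_basis D.subtype cD N,
    range_map_eq_span_basis (C ⊓ D).subtype cE N]
  -- rewrite ranges as images over the big index set
  have key : ∀ (s' : Set V), s' ⊆ I → ∀ (P : Submodule ℂ V) (c : Basis s' ℂ P),
      (∀ x : s', (P.subtype (c x) : V) = x) →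
      (Set.range fun f : Fin N → s' => PiTensorProduct.tprod ℂ fun i => P.subtype (c (f i)))
      = (fun h : Fin N → I => PiTensorProduct.tprod ℂ fun i => b (h i)) ''
          {h | ∀ i, (h i : V) ∈ s'} := by
    intro s' hs'I P c hc
    ext x
    simp only [Set.mem_range, Set.mem_image, Set.mem_setOf_eq]
    constructor
    · rintro ⟨f, rfl⟩
      refine ⟨fun i => ⟨(f i : V), hs'I (f i).2⟩, fun i => (f i).2, ?_⟩
      refine congrArg _ (funext fun i => ?_)
      rw [hbcoe]
      exact (hc (f i)).symm
    · rintro ⟨h, hh, rfl⟩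
      refine ⟨fun i => ⟨(h i : V), hh i⟩, ?_⟩
      refine congrArg _ (funext fun i => ?_)
      rw [hbcoe]
      exact hc _
  rw [key sC hsCI C cC hcC, key sD hsDI D cD hcD, key sE hsEI (C ⊓ D) cE hcE]
  have hsetE : {h : Fin N → I | ∀ i, (h i : V) ∈ sE}
      = {h : Fin N → I | ∀ i, h i ∈ (((↑) : I → V) ⁻¹' sC) ∩ (((↑) : I → V) ⁻¹' sD)} := by
    ext h
    simp only [Set.mem_setOf_eq, Set.mem_inter_iff, Set.mem_preimage, ← hInter,
      Set.mem_inter_iff]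
  rw [hsetE]
  exact span_tprod_inf b (((↑) : I → V) ⁻¹' sC) (((↑) : I → V) ⁻¹' sD) N
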